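/- arXiv:2201.02720 — 2 statements merged into one kernel-verified Lean document; each statement's English description precedes it below -/
import Mathlib

section
/- Let M be a real symmetric n×n matrix with n ≥ 3, and let T be a set of at least three indices such that for all distinct u, v ∈ T, the vector e_u - e_v is an eigenvector of M for a common eigenvalue θ. Then for every u ∈ T and every real t, U(t)_{u,u} ≠ 0, where U(t) = exp(itM). -/
open Matrix Complex

/-- The continuous-time quantum walk transition matrix `U(t) = exp(i t M)`. -/
noncomputable def transU {n : ℕ} (M : Matrix (Fin n) (Fin n) ℝ) (t : ℝ) :
    Matrix (Fin n) (Fin n) ℂ :=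
  NormedSpace.exp ((Complex.I * (t : ℂ)) • M.map (fun x => (x : ℂ)))

section aux

variable {n : ℕ}

/-- exp of a matrix applied to an eigenvector. -/
lemma exp_mulVec_eigen (A : Matrix (Fin n) (Fin n) ℂ) (x : Fin n → ℂ) (μ : ℂ)
    (hx : A *ᵥ x = μ • x) :
    (NormedSpace.exp A) *ᵥ x = NormedSpace.exp μ • x := by
  letI : SeminormedRing (Matrix (Fin n) (Fin n) ℂ) := Matrix.linftyOpSemiNormedRing
  letI : NormedRing (Matrix (Fin n) (Fin n) ℂ) := Matrix.linftyOpNormedRing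
  letI : NormedAlgebra ℂ (Matrix (Fin n) (Fin n) ℂ) := Matrix.linftyOpNormedAlgebra
  have hpow : ∀ k : ℕ, A ^ k *ᵥ x = μ ^ k • x := by
    intro k
    induction k with
    | zero => simp
    | succ k ih =>
      rw [pow_succ', ← Matrix.mulVec_mulVec, ih, Matrix.mulVec_smul, hx, smul_smul, pow_succ', mul_comm]
  have hsum : Summable fun k : ℕ => ((k.factorial)⁻¹ : ℂ) • A ^ k :=
    NormedSpace.expSeries_summable' A
  let L : Matrix (Fin n) (Fin n) ℂ →ₗ[ℂ] (Fin n → ℂ) :=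
    { toFun := fun B => B *ᵥ x
      map_add' := fun B C => Matrix.add_mulVec B C x
      map_smul' := fun c B => Matrix.smul_mulVec c B x }
  have hLcont : Continuous L := L.continuous_of_finiteDimensional
  have key : L (NormedSpace.exp A) = NormedSpace.exp μ • x := by
    rw [NormedSpace.exp_eq_tsum (𝕂 := ℂ)]
    show L (∑' k : ℕ, ((k.factorial)⁻¹ : ℂ) • A ^ k) = _
    have hmt := ((⟨L, hLcont⟩ : Matrix (Fin n) (Fin n) ℂ →L[ℂ] (Fin n → ℂ)).map_tsum hsum)
    simp only [ContinuousLinearMap.coe_mk'] at hmt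
    rw [hmt]
    have : ∀ k : ℕ, L (((k.factorial)⁻¹ : ℂ) • A ^ k) = (((k.factorial)⁻¹ : ℂ) * μ ^ k) • x := by
      intro k
      rw [_root_.map_smul]
      simp only [L, LinearMap.coe_mk, AddHom.coe_mk]
      rw [hpow k, smul_smul]
    calc ∑' k : ℕ, L (((k.factorial)⁻¹ : ℂ) • A ^ k)
        = ∑' k : ℕ, (((k.factorial)⁻¹ : ℂ) * μ ^ k) • x := by simp_rw [this]
      _ = (∑' k : ℕ, ((k.factorial)⁻¹ : ℂ) * μ ^ k) • x := by
          exact Summable.tsum_smul_const (by simpa [smul_eq_mul] using NormedSpace.expSeries_summable' (𝕂 := ℂ) μ) x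
      _ = NormedSpace.exp μ • x := by rw [NormedSpace.exp_eq_tsum (𝕂 := ℂ)]; simp [smul_eq_mul]
  exact key

end aux

theorem stmt3 {n : ℕ} (hn : 3 ≤ n) (M : Matrix (Fin n) (Fin n) ℝ) (hM : M.IsSymm)
    (T : Finset (Fin n)) (hT : 3 ≤ T.card) (θ : ℝ)
    (htwin : ∀ u ∈ T, ∀ v ∈ T, u ≠ v →
      M *ᵥ (Pi.single u 1 - Pi.single v 1) = θ • (Pi.single u 1 - Pi.single v 1)) :
    ∀ u ∈ T, ∀ t : ℝ, transU M t u u ≠ 0 := by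
  intro u hu t huu
  set A : Matrix (Fin n) (Fin n) ℂ := (Complex.I * (t : ℂ)) • M.map (fun x => (x : ℂ)) with hA
  set U : Matrix (Fin n) (Fin n) ℂ := NormedSpace.exp A with hU
  -- unitarity
  have hAH : Aᴴ = -A := by
    ext i j
    simp only [hA, Matrix.conjTranspose_apply, Matrix.smul_apply, Matrix.map_apply,
      Matrix.neg_apply, smul_eq_mul, star_mul', RCLike.star_def, _root_.map_mul, Complex.conj_I,
      Complex.conj_ofReal, neg_mul]
    rw [show M j i = M i j from (Matrix.IsSymm.apply hM i j)]
    try ring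
  have hunit : U * Uᴴ = 1 := by
    rw [hU, ← Matrix.exp_conjTranspose, hAH, ← Matrix.exp_add_of_commute A (-A) (Commute.neg_right (Commute.refl A))]
    simp [NormedSpace.exp_zero]
  have hrow : ∑ j : Fin n, Complex.normSq (U u j) = 1 := by
    have h1 : (U * Uᴴ) u u = 1 := by rw [hunit]; simp
    rw [Matrix.mul_apply] at h1
    have : ∀ j, U u j * Uᴴ j u = (Complex.normSq (U u j) : ℂ) := by
      intro j
      rw [Matrix.conjTranspose_apply]
      exact Complex.mul_conj (U u j)
    rw [Finset.sum_congr rfl (fun j _ => this j)] at h1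
    have := congrArg Complex.re h1
    simpa using this
  -- eigen fact: for v ∈ T, v ≠ u, U u u - U u v = exp(I t θ)
  have hkey : ∀ v ∈ T, v ≠ u → U u v = -Complex.exp (Complex.I * t * θ) := by
    intro v hv hvu
    set x : Fin n → ℂ := fun j => ((Pi.single u 1 - Pi.single v 1 : Fin n → ℝ) j : ℂ) with hx
    have hMx : M.map (fun r => (r : ℂ)) *ᵥ x = (θ : ℂ) • x := by
      funext i
      have hre := congrFun (htwin u hu v hv hvu.symm) i
      simp only [Matrix.mulVec, dotProduct, Pi.smul_apply, smul_eq_mul] at hre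
      show ∑ j, (M.map fun r : ℝ => (r : ℂ)) i j * x j = ((θ : ℂ) • x) i
      simp only [Matrix.map_apply, Pi.smul_apply, smul_eq_mul, hx]
      exact_mod_cast congrArg Complex.ofReal hre
    have hAx : A *ᵥ x = (Complex.I * t * θ) • x := by
      rw [hA, Matrix.smul_mulVec, hMx, smul_smul, mul_assoc]
    have := exp_mulVec_eigen A x (Complex.I * t * θ) hAx
    have hcoord := congrFun this u
    have hexp : NormedSpace.exp (Complex.I * t * θ) = Complex.exp (Complex.I * t * θ) := by
      rw [Complex.exp_eq_exp_ℂ]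
    have hxu : x u = 1 := by simp [hx, Pi.single_apply, hvu, Ne.symm hvu]
    have hxv : x v = -1 := by simp [hx, Pi.single_apply, hvu, Ne.symm hvu]
    have hmv : (U *ᵥ x) u = U u u - U u v := by
      rw [Matrix.mulVec, dotProduct]
      rw [show (Finset.univ : Finset (Fin n)) = insert u (insert v (Finset.univ \ {u, v})) by
        ext j; by_cases hju : j = u <;> by_cases hjv : j = v <;> simp [hju, hjv]]
      rw [Finset.sum_insert (by simp [hvu, Ne.symm hvu]), Finset.sum_insert (by simp)]
      rw [hxu, hxv]
      have : ∑ j ∈ Finset.univ \ {u, v}, U u j * x j = 0 := by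
        apply Finset.sum_eq_zero
        intro j hj
        simp only [Finset.mem_sdiff, Finset.mem_insert, Finset.mem_singleton] at hj
        have hju : j ≠ u := fun h => hj.2 (Or.inl h)
        have hjv : j ≠ v := fun h => hj.2 (Or.inr h)
        simp [hx, Pi.single_apply, hju, hjv]
      rw [this]
      ring
    rw [hmv, hexp] at hcoord
    rw [Pi.smul_apply, hxu, smul_eq_mul, mul_one] at hcoord
    have h0 : U u u = 0 := huu
    rw [h0] at hcoord
    linear_combination -hcoord
  -- now find two distinct v, w in T.erase u
  have hce : 2 ≤ (T.erase u).card := by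
    have := Finset.card_erase_of_mem hu
    omega
  obtain ⟨v, hv, w, hw, hvw⟩ := Finset.one_lt_card.mp (by omega : 1 < (T.erase u).card)
  have hv' := Finset.mem_erase.mp hv
  have hw' := Finset.mem_erase.mp hw
  have hnorm : ∀ z ∈ T.erase u, Complex.normSq (U u z) = 1 := by
    intro z hz
    have hz' := Finset.mem_erase.mp hz
    rw [hkey z hz'.2 hz'.1]
    rw [Complex.normSq_neg, ← Complex.sq_norm, Complex.norm_exp]
    have : (Complex.I * t * θ).re = 0 := by simp
    rw [this, Real.exp_zero]; norm_num
  have h2 : (2 : ℝ) ≤ ∑ j : Fin n, Complex.normSq (U u j) := by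
    have hsub : ({v, w} : Finset (Fin n)) ⊆ Finset.univ := Finset.subset_univ _
    calc (2 : ℝ) = ∑ j ∈ ({v, w} : Finset (Fin n)), Complex.normSq (U u j) := by
          rw [Finset.sum_insert (by simp [hvw]), Finset.sum_singleton, hnorm v hv, hnorm w hw]
          norm_num
      _ ≤ _ := Finset.sum_le_sum_of_subset_of_nonneg hsub
          (fun j _ _ => Complex.normSq_nonneg _)
  rw [hrow] at h2
  linarith
end

section
/- Let M be a real symmetric matrix, and u, v strongly cospectral indices with σ_u⁻(M) = {θ} and σ_u⁺(M) = {λ₁,...,λ_r}, where λ_j = θ + b_j√Δ for nonzero integers b_j and a squarefree positive integer Δ (or Δ = 1). If the 2-adic valuations ν₂(b_j) are all equal to some q ≥ 0, then perfect state transfer occurs between u and v at time τ = π/(2^q g' √Δ), where g' = gcd(b₁/2^q, ..., b_r/2^q), and this is the minimum PST time. Conversely, if ν₂(b_j) ≠ ν₂(b_k) for some j, k, then perfect state transfer never occurs between u and v. -/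
open Matrix Complex

/-- `S, E` constitute the spectral decomposition of the real symmetric matrix `M`
(viewed as a complex matrix): the `E lam` for `lam ∈ S` are mutually orthogonal
Hermitian projections summing to the identity, and `M = ∑ lam • E lam`. -/
def IsSpectralDecompOf {n : ℕ} (M : Matrix (Fin n) (Fin n) ℝ)
    (S : Finset ℝ) (E : ℝ → Matrix (Fin n) (Fin n) ℂ) : Prop :=
  (∀ lam ∈ S, (E lam).IsHermitian ∧ E lam * E lam = E lam) ∧
  (∀ lam ∈ S, ∀ mu ∈ S, lam ≠ mu → E lam * E mu = 0) ∧
  (∑ lam ∈ S, E lam) = 1 ∧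
  M.map (fun x => (x : ℂ)) = ∑ lam ∈ S, (lam : ℂ) • E lam

section Aux

open Nat in
lemma exp_smul_idem {n : ℕ} (P : Matrix (Fin n) (Fin n) ℂ) (hP : P * P = P) (c : ℂ) :
    NormedSpace.exp (c • P) = 1 + (Complex.exp c - 1) • P := by
  letI : SeminormedRing (Matrix (Fin n) (Fin n) ℂ) := Matrix.linftyOpSemiNormedRing
  letI : NormedRing (Matrix (Fin n) (Fin n) ℂ) := Matrix.linftyOpNormedRing
  letI : NormedAlgebra ℂ (Matrix (Fin n) (Fin n) ℂ) := Matrix.linftyOpNormedAlgebra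
  have hpow : ∀ k : ℕ, (c • P) ^ (k + 1) = c ^ (k + 1) • P := by
    intro k
    induction k with
    | zero => simp
    | succ k ih =>
        rw [pow_succ, ih, smul_mul_assoc, mul_smul_comm, hP, smul_smul, ← pow_succ]
  simp only [NormedSpace.exp_eq_tsum ℂ]
  have hsumm : Summable fun k : ℕ => (k ! : ℂ)⁻¹ • (c • P) ^ k :=
    NormedSpace.expSeries_summable' (𝕂 := ℂ) (c • P)
  rw [hsumm.tsum_eq_zero_add]
  have h1 : ∀ k : ℕ, ((k + 1)! : ℂ)⁻¹ • (c • P) ^ (k + 1)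
      = (((k + 1)! : ℂ)⁻¹ * c ^ (k + 1)) • P := by
    intro k; rw [hpow, smul_smul]
  simp only [h1, pow_zero, Nat.factorial_zero, Nat.cast_one, inv_one, one_smul]
  have hsumm2 : Summable fun k : ℕ => ((k + 1)! : ℂ)⁻¹ * c ^ (k + 1) := by
    have := NormedSpace.expSeries_summable' (𝕂 := ℂ) c
    simpa [smul_eq_mul] using ((summable_nat_add_iff 1).2 this)
  rw [hsumm2.tsum_smul_const]
  congr 2
  have hs : Summable fun k : ℕ => (k ! : ℂ)⁻¹ * c ^ k := by
    simpa [smul_eq_mul] using NormedSpace.expSeries_summable' (𝕂 := ℂ) c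
  have hc : Complex.exp c = ∑' k : ℕ, (k ! : ℂ)⁻¹ * c ^ k := by
    rw [Complex.exp_eq_exp_ℂ, NormedSpace.exp_eq_tsum ℂ]; simp [smul_eq_mul]
  rw [hc, hs.tsum_eq_zero_add]
  simp

lemma exp_sum_smul_orth {n : ℕ} (S : Finset ℝ) (E : ℝ → Matrix (Fin n) (Fin n) ℂ)
    (c : ℝ → ℂ)
    (hidem : ∀ lam ∈ S, E lam * E lam = E lam)
    (horth : ∀ lam ∈ S, ∀ mu ∈ S, lam ≠ mu → E lam * E mu = 0) :
    NormedSpace.exp (∑ lam ∈ S, c lam • E lam)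
      = 1 + ∑ lam ∈ S, (Complex.exp (c lam) - 1) • E lam := by
  classical
  induction S using Finset.induction_on with
  | empty => simp [NormedSpace.exp_zero]
  | @insert a T ha ih =>
    have haT : ∀ lam ∈ T, E a * E lam = 0 ∧ E lam * E a = 0 := by
      intro lam hl
      have hane : a ≠ lam := fun h => ha (h ▸ hl)
      exact ⟨horth a (Finset.mem_insert_self a T) lam (Finset.mem_insert_of_mem hl) hane,
        horth lam (Finset.mem_insert_of_mem hl) a (Finset.mem_insert_self a T) hane.symm⟩
    have hmul0' : ∀ (x : ℂ) (f : ℝ → ℂ), (x • E a) * ∑ lam ∈ T, f lam • (E lam) = 0 := by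
      intro x f
      rw [Finset.mul_sum]
      refine Finset.sum_eq_zero fun lam hl => ?_
      rw [smul_mul_smul_comm, (haT lam hl).1, smul_zero]
    have hmul0'' : ∀ (x : ℂ) (f : ℝ → ℂ), (∑ lam ∈ T, f lam • (E lam)) * (x • E a) = 0 := by
      intro x f
      rw [Finset.sum_mul]
      refine Finset.sum_eq_zero fun lam hl => ?_
      rw [smul_mul_smul_comm, (haT lam hl).2, smul_zero]
    have hcomm : Commute (c a • E a) (∑ lam ∈ T, c lam • E lam) := by
      unfold Commute SemiconjBy
      rw [hmul0' (c a) c, hmul0'' (c a) c]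
    rw [Finset.sum_insert ha, Matrix.exp_add_of_commute _ _ hcomm,
      exp_smul_idem (E a) (hidem a (Finset.mem_insert_self a T)) (c a),
      ih (fun lam hl => hidem lam (Finset.mem_insert_of_mem hl))
        (fun lam hl mu hm hne => horth lam (Finset.mem_insert_of_mem hl) mu
          (Finset.mem_insert_of_mem hm) hne),
      Finset.sum_insert ha]
    rw [mul_add, add_mul, add_mul, hmul0' _ (fun lam => Complex.exp (c lam) - 1)]
    simp only [mul_one, one_mul, add_zero]
    abel

lemma transU_eq {n : ℕ} (M : Matrix (Fin n) (Fin n) ℝ) (S : Finset ℝ)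
    (E : ℝ → Matrix (Fin n) (Fin n) ℂ) (hSE : IsSpectralDecompOf M S E) (t : ℝ) :
    transU M t = ∑ lam ∈ S, Complex.exp (Complex.I * t * lam) • E lam := by
  obtain ⟨h1, h2, h3, h4⟩ := hSE
  rw [transU, h4, Finset.smul_sum]
  simp_rw [smul_smul]
  rw [exp_sum_smul_orth S E _ (fun lam hl => (h1 lam hl).2) h2, ← h3,
    ← Finset.sum_add_distrib]
  refine Finset.sum_congr rfl fun lam _ => ?_
  rw [sub_smul, one_smul]
  rw [show Complex.I * (t : ℂ) * (lam : ℂ) = Complex.I * (t : ℂ) * (lam : ℂ) from rfl]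
  abel

lemma mulVec_finset_sum {n : ℕ} {ι : Type*} (s : Finset ι)
    (A : ι → Matrix (Fin n) (Fin n) ℂ) (x : Fin n → ℂ) :
    (∑ i ∈ s, A i) *ᵥ x = ∑ i ∈ s, A i *ᵥ x := by
  classical
  induction s using Finset.induction_on with
  | empty => simp [Matrix.zero_mulVec]
  | @insert a T ha ih => rw [Finset.sum_insert ha, Finset.sum_insert ha, Matrix.add_mulVec, ih]

lemma mulVec_sum_vec {n : ℕ} {ι : Type*} (s : Finset ι)
    (A : Matrix (Fin n) (Fin n) ℂ) (f : ι → Fin n → ℂ) :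
    A *ᵥ (∑ i ∈ s, f i) = ∑ i ∈ s, A *ᵥ f i := by
  classical
  induction s using Finset.induction_on with
  | empty => simp [Matrix.mulVec_zero]
  | @insert a T ha ih => rw [Finset.sum_insert ha, Finset.sum_insert ha, Matrix.mulVec_add, ih]

lemma exp_I_mul_eq_neg_one_iff (x : ℝ) :
    Complex.exp (Complex.I * x) = -1 ↔ ∃ m : ℤ, x = (2 * m + 1) * Real.pi := by
  rw [show (-1 : ℂ) = Complex.exp (Real.pi * Complex.I) from Complex.exp_pi_mul_I.symm,
    Complex.exp_eq_exp_iff_exists_int]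
  constructor
  · rintro ⟨nn, hn⟩
    refine ⟨nn, ?_⟩
    have h2 : (x : ℂ) * Complex.I = ((2 * (nn : ℝ) + 1) * Real.pi : ℝ) * Complex.I := by
      push_cast
      linear_combination hn
    have h3 := mul_right_cancel₀ Complex.I_ne_zero h2
    exact_mod_cast h3
  · rintro ⟨m, hm⟩
    exact ⟨m, by rw [hm]; push_cast; ring⟩

lemma finset_gcd_bezout {ι : Type*} (s : Finset ι) (f : ι → ℤ) :
    ∃ x : ι → ℤ, (s.gcd f : ℤ) = ∑ j ∈ s, x j * f j := by
  classical
  induction s using Finset.induction_on with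
  | empty => exact ⟨0, by simp⟩
  | @insert a T ha ih =>
    obtain ⟨x, hx⟩ := ih
    refine ⟨fun i => if i = a then Int.gcdA (f a) (T.gcd f)
      else Int.gcdB (f a) (T.gcd f) * x i, ?_⟩
    rw [Finset.gcd_insert, Finset.sum_insert ha]
    simp only [if_pos rfl]
    have hsum : ∀ i ∈ T,
        (if i = a then Int.gcdA (f a) (T.gcd f) else Int.gcdB (f a) (T.gcd f) * x i) * f i
        = Int.gcdB (f a) (T.gcd f) * (x i * f i) := by
      intro i hi
      rw [if_neg (fun h => ha (by rw [← h]; exact hi))]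
      ring
    rw [Finset.sum_congr rfl hsum, ← Finset.mul_sum, ← hx]
    rw [← Int.coe_gcd, Int.gcd_eq_gcd_ab]
    simp only [if_pos, if_true]
    ring

lemma key_iff {n : ℕ} (M : Matrix (Fin n) (Fin n) ℝ)
    (S : Finset ℝ) (E : ℝ → Matrix (Fin n) (Fin n) ℂ)
    (hSE : IsSpectralDecompOf M S E) (u v : Fin n)
    (r : ℕ) (lam : Fin r → ℝ) (hinj : Function.Injective lam)
    (θ : ℝ) (hθS : θ ∈ S) (hlamS : ∀ j, lam j ∈ S) (hθlam : ∀ j, θ ≠ lam j)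
    (hplus : ∀ j, E (lam j) *ᵥ Pi.single u 1 = E (lam j) *ᵥ Pi.single v 1 ∧
      E (lam j) *ᵥ Pi.single u 1 ≠ 0)
    (hminus : E θ *ᵥ Pi.single u 1 = -(E θ *ᵥ Pi.single v 1) ∧
      E θ *ᵥ Pi.single u 1 ≠ 0)
    (hrest : ∀ mu ∈ S, mu ∉ Set.range lam → mu ≠ θ →
      E mu *ᵥ Pi.single u 1 = 0 ∧ E mu *ᵥ Pi.single v 1 = 0)
    (t : ℝ) (γ : ℂ) :
    transU M t *ᵥ Pi.single u 1 = γ • (Pi.single v 1 : Fin n → ℂ) ↔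
      ((∀ j, Complex.exp (Complex.I * t * (lam j)) = γ) ∧
        Complex.exp (Complex.I * t * θ) = -γ) := by
  classical
  obtain ⟨h1, h2, h3, h4⟩ := hSE
  set eu : Fin n → ℂ := Pi.single u 1 with heu
  set ev : Fin n → ℂ := Pi.single v 1 with hev
  have hθim : θ ∉ Finset.image lam Finset.univ := by
    simp only [Finset.mem_image, Finset.mem_univ, true_and, not_exists]
    exact fun j h => hθlam j h.symm
  have hTS : insert θ (Finset.image lam Finset.univ) ⊆ S := by
    intro x hx
    rcases Finset.mem_insert.1 hx with h | h
    · exact h ▸ hθS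
    · obtain ⟨j, -, rfl⟩ := Finset.mem_image.1 h
      exact hlamS j
  have hnotT : ∀ x ∈ S, x ∉ insert θ (Finset.image lam Finset.univ) →
      x ∉ Set.range lam ∧ x ≠ θ := by
    intro x _ hxT
    constructor
    · rintro ⟨j, rfl⟩
      exact hxT (Finset.mem_insert_of_mem (Finset.mem_image_of_mem lam (Finset.mem_univ j)))
    · intro h
      exact hxT (by rw [h]; exact Finset.mem_insert_self θ _)
  have hsplit : ∀ (f : ℝ → ℂ) (w : ℝ → Fin n → ℂ),
      (∀ x ∈ S, x ∉ Set.range lam → x ≠ θ → w x = 0) →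
      ∑ mu ∈ S, f mu • w mu = f θ • w θ + ∑ j, f (lam j) • w (lam j) := by
    intro f w hw
    rw [← Finset.sum_subset hTS (fun x hx hxT => by
      rw [hw x hx (hnotT x hx hxT).1 (hnotT x hx hxT).2, smul_zero])]
    rw [Finset.sum_insert hθim, Finset.sum_image (fun a _ c _ h => hinj h)]
  have hU : transU M t *ᵥ eu = Complex.exp (Complex.I * t * θ) • (E θ *ᵥ eu)
      + ∑ j, Complex.exp (Complex.I * t * (lam j)) • (E (lam j) *ᵥ eu) := by
    rw [transU_eq M S E ⟨h1, h2, h3, h4⟩ t, mulVec_finset_sum]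
    simp_rw [Matrix.smul_mulVec]
    exact hsplit _ _ (fun x hx hr1 hr2 => (hrest x hx hr1 hr2).1)
  have hv : ev = -(E θ *ᵥ eu) + ∑ j, (E (lam j) *ᵥ eu) := by
    have h0 : ev = ∑ mu ∈ S, (1 : ℂ) • (E mu *ᵥ ev) := by
      simp_rw [one_smul]
      rw [← mulVec_finset_sum, h3, Matrix.one_mulVec]
    rw [h0, hsplit _ _ (fun x hx hr1 hr2 => (hrest x hx hr1 hr2).2)]
    simp_rw [one_smul]
    congr 1
    · rw [← neg_eq_iff_eq_neg.2 hminus.1]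
    · exact Finset.sum_congr rfl fun j _ => ((hplus j).1).symm
  set cθ : ℂ := Complex.exp (Complex.I * t * θ) with hcθ
  have hθθ : E θ * E θ = E θ := (h1 θ hθS).2
  have hθj : ∀ j, E θ * E (lam j) = 0 := fun j => h2 θ hθS (lam j) (hlamS j) (hθlam j)
  have hjθ : ∀ j, E (lam j) * E θ = 0 := fun j => h2 (lam j) (hlamS j) θ hθS (hθlam j).symm
  have hjk : ∀ j k, j ≠ k → E (lam j) * E (lam k) = 0 := fun j k hne =>
    h2 (lam j) (hlamS j) (lam k) (hlamS k) (fun hh => hne (hinj hh))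
  have hjj : ∀ j, E (lam j) * E (lam j) = E (lam j) := fun j => (h1 (lam j) (hlamS j)).2
  constructor
  · intro h
    have heq : cθ • (E θ *ᵥ eu) + ∑ j, Complex.exp (Complex.I * t * (lam j)) • (E (lam j) *ᵥ eu)
        = γ • (-(E θ *ᵥ eu) + ∑ j, (E (lam j) *ᵥ eu)) := by
      rw [← hU, ← hv, h]
    constructor
    · intro j
      have h5 := congrArg (fun w => E (lam j) *ᵥ w) heq
      simp only [Matrix.mulVec_add, Matrix.mulVec_smul, Matrix.mulVec_neg, mulVec_sum_vec,
        Matrix.mulVec_mulVec] at h5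
      rw [hjθ j, Matrix.zero_mulVec, smul_zero, zero_add] at h5
      rw [Finset.sum_eq_single_of_mem j (Finset.mem_univ j)
        (fun k _ hk => by rw [hjk j k (Ne.symm hk), Matrix.zero_mulVec, smul_zero]),
        hjj j] at h5
      rw [Finset.sum_eq_single_of_mem j (Finset.mem_univ j)
        (fun k _ hk => by rw [hjk j k (Ne.symm hk), Matrix.zero_mulVec]),
        hjj j] at h5
      rw [neg_zero, zero_add] at h5
      have h6 : (Complex.exp (Complex.I * t * (lam j)) - γ) • (E (lam j) *ᵥ eu) = 0 := by
        rw [sub_smul, h5, sub_self]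
      rcases smul_eq_zero.1 h6 with hc | hw
      · exact sub_eq_zero.1 hc
      · exact absurd hw (hplus j).2
    · have h5 := congrArg (fun w => E θ *ᵥ w) heq
      simp only [Matrix.mulVec_add, Matrix.mulVec_smul, Matrix.mulVec_neg, mulVec_sum_vec,
        Matrix.mulVec_mulVec] at h5
      rw [hθθ] at h5
      rw [Finset.sum_eq_zero
        (fun k _ => by rw [hθj k, Matrix.zero_mulVec, smul_zero]), add_zero] at h5
      rw [Finset.sum_eq_zero
        (fun k _ => by rw [hθj k, Matrix.zero_mulVec]), add_zero] at h5
      have h6 : (cθ + γ) • (E θ *ᵥ eu) = 0 := by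
        rw [add_smul, h5, smul_neg]
        abel
      rcases smul_eq_zero.1 h6 with hc | hw
      · exact eq_neg_of_add_eq_zero_left hc
      · exact absurd hw hminus.2
  · rintro ⟨hA, hB⟩
    rw [hU, hv]
    simp_rw [hA]
    rw [hB, smul_add, smul_neg, neg_smul, Finset.smul_sum]

end Aux

theorem stmt14 {n : ℕ} (M : Matrix (Fin n) (Fin n) ℝ) (hM : M.IsSymm)
    (S : Finset ℝ) (E : ℝ → Matrix (Fin n) (Fin n) ℂ)
    (hSE : IsSpectralDecompOf M S E) (u v : Fin n) (huv : u ≠ v)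
    (r : ℕ) (hr : 0 < r) (lam : Fin r → ℝ) (hinj : Function.Injective lam)
    (θ : ℝ) (hθS : θ ∈ S) (hlamS : ∀ j, lam j ∈ S) (hθlam : ∀ j, θ ≠ lam j)
    -- σ_u⁺(M) = {lam 1, ..., lam r}
    (hplus : ∀ j, E (lam j) *ᵥ Pi.single u 1 = E (lam j) *ᵥ Pi.single v 1 ∧
      E (lam j) *ᵥ Pi.single u 1 ≠ 0)
    -- σ_u⁻(M) = {θ}
    (hminus : E θ *ᵥ Pi.single u 1 = -(E θ *ᵥ Pi.single v 1) ∧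
      E θ *ᵥ Pi.single u 1 ≠ 0)
    (hrest : ∀ mu ∈ S, mu ∉ Set.range lam → mu ≠ θ →
      E mu *ᵥ Pi.single u 1 = 0 ∧ E mu *ᵥ Pi.single v 1 = 0)
    -- lam j = θ + b j √Δ with b j nonzero integers and Δ = 1 or squarefree Δ > 1
    (b : Fin r → ℤ) (hb : ∀ j, b j ≠ 0)
    (Δ : ℕ) (hΔ : Δ = 1 ∨ (1 < Δ ∧ Squarefree Δ))
    (hform : ∀ j, lam j = θ + (b j : ℝ) * Real.sqrt Δ) :
    -- equal 2-adic valuations: PST at time π/(2^q g' √Δ), and it is the minimum PST time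
    (∀ q : ℕ, (∀ j, padicValInt 2 (b j) = q) →
      letI g' : ℤ := Finset.univ.gcd (fun j => b j / 2 ^ q)
      letI τ : ℝ := Real.pi / (2 ^ q * (g' : ℝ) * Real.sqrt Δ)
      (∃ γ : ℂ, ‖γ‖ = 1 ∧
        transU M τ *ᵥ Pi.single u 1 = γ • (Pi.single v 1 : Fin n → ℂ)) ∧
      (∀ τ' : ℝ, 0 < τ' →
        (∃ γ : ℂ, ‖γ‖ = 1 ∧
          transU M τ' *ᵥ Pi.single u 1 = γ • (Pi.single v 1 : Fin n → ℂ)) → τ ≤ τ')) ∧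
    -- unequal 2-adic valuations: no PST at any time
    ((∃ j k, padicValInt 2 (b j) ≠ padicValInt 2 (b k)) →
      ∀ τ : ℝ, ¬∃ γ : ℂ, ‖γ‖ = 1 ∧
        transU M τ *ᵥ Pi.single u 1 = γ • (Pi.single v 1 : Fin n → ℂ)) := by
  classical
  haveI : Fact (Nat.Prime 2) := ⟨Nat.prime_two⟩
  have hΔpos : (0:ℝ) < Δ := by
    rcases hΔ with h | h
    · rw [h]; norm_num
    · exact_mod_cast Nat.lt_of_lt_of_le Nat.zero_lt_one h.1.le
  have hsqpos : 0 < Real.sqrt Δ := Real.sqrt_pos.2 hΔpos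
  have key2 : ∀ t : ℝ, (∃ γ : ℂ, ‖γ‖ = 1 ∧
      transU M t *ᵥ Pi.single u 1 = γ • (Pi.single v 1 : Fin n → ℂ)) ↔
      ∀ j, ∃ m : ℤ, t * (b j) * Real.sqrt Δ = (2*m+1) * Real.pi := by
    intro t
    constructor
    · rintro ⟨γ, hγ1, hγ2⟩
      obtain ⟨hA, hB⟩ := (key_iff M S E hSE u v r lam hinj θ hθS hlamS hθlam hplus hminus
        hrest t γ).1 hγ2
      intro j
      have hγ0 : γ ≠ 0 := by
        intro h0; rw [h0] at hγ1; simp at hγ1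
      have hsplitexp : Complex.exp (Complex.I * t * (lam j))
          = Complex.exp (Complex.I * t * θ) *
            Complex.exp (Complex.I * (t * b j * Real.sqrt Δ : ℝ)) := by
        rw [← Complex.exp_add]
        congr 1
        rw [hform j]
        push_cast
        ring
      rw [hA j, hB] at hsplitexp
      have hX : Complex.exp (Complex.I * (t * b j * Real.sqrt Δ : ℝ)) = -1 := by
        refine mul_left_cancel₀ (neg_ne_zero.2 hγ0) ?_
        rw [← hsplitexp]
        ring
      exact (exp_I_mul_eq_neg_one_iff _).1 hX
    · intro hodd
      refine ⟨-Complex.exp (Complex.I * t * θ), ?_, ?_⟩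
      · rw [norm_neg]
        rw [show Complex.I * (t:ℂ) * (θ:ℂ) = Complex.I * ((t*θ:ℝ):ℂ) by push_cast; ring]
        rw [Complex.norm_exp]
        simp
      · refine (key_iff M S E hSE u v r lam hinj θ hθS hlamS hθlam hplus hminus
          hrest t _).2 ⟨?_, (neg_neg _).symm⟩
        intro j
        obtain ⟨m, hm⟩ := hodd j
        have hsplitexp : Complex.exp (Complex.I * t * (lam j))
            = Complex.exp (Complex.I * t * θ) *
              Complex.exp (Complex.I * (t * b j * Real.sqrt Δ : ℝ)) := by
          rw [← Complex.exp_add]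
          congr 1
          rw [hform j]
          push_cast
          ring
        rw [hsplitexp, (exp_I_mul_eq_neg_one_iff _).2 ⟨m, hm⟩]
        ring
  constructor
  · intro q hq
    set c : Fin r → ℤ := fun j => b j / 2^q with hcdef
    set g' : ℤ := Finset.univ.gcd c with hg'def
    have hdvd : ∀ j, (2:ℤ)^q ∣ b j := by
      intro j
      have h := padicValInt_dvd (p := 2) (b j)
      rw [hq j] at h
      exact_mod_cast h
    have hbc : ∀ j, b j = 2^q * c j := fun j => (Int.mul_ediv_cancel' (hdvd j)).symm
    have hc0 : ∀ j, c j ≠ 0 := fun j h0 => hb j (by rw [hbc j, h0, mul_zero])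
    have hcodd : ∀ j, ¬ (2:ℤ) ∣ c j := by
      intro j h2d
      obtain ⟨k, hk⟩ := h2d
      have hdd : (2:ℤ)^(q+1) ∣ b j := ⟨k, by rw [hbc j, hk]; ring⟩
      have h9 := (padicValInt_dvd_iff (p := 2) (q+1) (b j)).1 (by exact_mod_cast hdd)
      rcases h9 with h9 | h9
      · exact hb j h9
      · rw [hq j] at h9; omega
    have hg'dvd : ∀ j, g' ∣ c j := fun j => Finset.gcd_dvd (Finset.mem_univ j)
    have hg'0 : g' ≠ 0 := by
      intro h0
      rw [hg'def, Finset.gcd_eq_zero_iff] at h0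
      exact hc0 ⟨0, hr⟩ (h0 _ (Finset.mem_univ _))
    have hg'pos : 0 < g' :=
      lt_of_le_of_ne (Int.nonneg_of_normalize_eq_self Finset.normalize_gcd) (Ne.symm hg'0)
    have hg'Rpos : (0:ℝ) < (g':ℝ) := by exact_mod_cast hg'pos
    have hDpos : 0 < 2^q * (g':ℝ) * Real.sqrt Δ :=
      mul_pos (mul_pos (by positivity) hg'Rpos) hsqpos
    set d : Fin r → ℤ := fun j => c j / g' with hddef
    have hcd : ∀ j, c j = g' * d j := fun j => (Int.mul_ediv_cancel' (hg'dvd j)).symm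
    have hdodd : ∀ j, ∃ m : ℤ, d j = 2*m+1 := by
      intro j
      have hnd : ¬ (2:ℤ) ∣ d j := fun ⟨k, hk⟩ => hcodd j ⟨g' * k, by rw [hcd j, hk]; ring⟩
      exact ⟨d j / 2, by omega⟩
    constructor
    · rw [key2]
      intro j
      obtain ⟨m, hm⟩ := hdodd j
      refine ⟨m, ?_⟩
      have hbR : (b j : ℝ) = 2^q * (g':ℝ) * ((2*(m:ℝ)+1)) := by
        have : b j = 2^q * g' * (2*m+1) := by rw [hbc j, hcd j, hm]; ring
        exact_mod_cast congrArg (Int.cast : ℤ → ℝ) this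
      rw [div_mul_eq_mul_div, div_mul_eq_mul_div, div_eq_iff (ne_of_gt hDpos), hbR]
      ring
    · intro τ' hτ' hPST
      rw [key2] at hPST
      choose m hm using hPST
      obtain ⟨x, hx⟩ := finset_gcd_bezout Finset.univ c
      set K : ℤ := ∑ j, x j * (2 * m j + 1) with hKdef
      have hmain : τ' * Real.sqrt Δ * (2^q * (g':ℝ)) = K * Real.pi := by
        have h1 : (g':ℝ) = ∑ j, (x j : ℝ) * (c j : ℝ) := by
          rw [hg'def]
          exact_mod_cast congrArg (Int.cast : ℤ → ℝ) hx
        calc τ' * Real.sqrt Δ * (2^q * (g':ℝ))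
            = ∑ j, (x j : ℝ) * (τ' * (b j) * Real.sqrt Δ) := by
              rw [h1, Finset.mul_sum, Finset.mul_sum]
              refine Finset.sum_congr rfl fun j _ => ?_
              have hbR : (b j:ℝ) = 2^q * (c j:ℝ) := by exact_mod_cast hbc j
              rw [hbR]; ring
          _ = (K:ℝ) * Real.pi := by
              rw [hKdef]
              push_cast
              rw [Finset.sum_mul]
              refine Finset.sum_congr rfl fun j _ => ?_
              rw [hm j]; ring
      have hKpos : 0 < (K:ℝ) := by
        have hL : 0 < τ' * Real.sqrt Δ * (2^q * (g':ℝ)) := by positivity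
        rw [hmain] at hL
        nlinarith [Real.pi_pos]
      have hK1 : (1:ℝ) ≤ (K:ℝ) := by
        have : (0:ℤ) < K := by exact_mod_cast hKpos
        exact_mod_cast this
      have hDeq : τ' * (2^q * (g':ℝ) * Real.sqrt Δ) = K * Real.pi := by
        rw [← hmain]; ring
      rw [div_le_iff₀ hDpos, hDeq]
      nlinarith [Real.pi_pos]
  · rintro ⟨j, k, hjk⟩ τ hPST
    rw [key2 τ] at hPST
    obtain ⟨mj, hmj⟩ := hPST j
    obtain ⟨mk, hmk⟩ := hPST k
    have h2 : ((2*(mj:ℝ)+1) * (b k)) * Real.pi = ((2*(mk:ℝ)+1) * (b j)) * Real.pi := by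
      have h1 : (2*(mj:ℝ)+1) * Real.pi * (b k) = (2*(mk:ℝ)+1) * Real.pi * (b j) := by
        rw [← hmj, ← hmk]; ring
      linarith [h1]
    have h3 := mul_right_cancel₀ Real.pi_ne_zero h2
    have hZ : (2*mj+1) * b k = (2*mk+1) * b j := by exact_mod_cast h3
    have hoddj : padicValInt 2 (2*mj+1) = 0 :=
      padicValInt.eq_zero_of_not_dvd (by simpa using (by omega : ¬(2:ℤ) ∣ (2*mj+1)))
    have hoddk : padicValInt 2 (2*mk+1) = 0 :=
      padicValInt.eq_zero_of_not_dvd (by simpa using (by omega : ¬(2:ℤ) ∣ (2*mk+1)))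
    have e1 : padicValInt 2 ((2*mj+1) * b k) = padicValInt 2 (b k) := by
      rw [padicValInt.mul (by omega) (hb k), hoddj, zero_add]
    have e2 : padicValInt 2 ((2*mk+1) * b j) = padicValInt 2 (b j) := by
      rw [padicValInt.mul (by omega) (hb j), hoddk, zero_add]
    apply hjk
    rw [← e2, ← hZ, e1]
end
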